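/- Let G be a connected simple graph such that m(T_G) = m(G − O(G)), where O(G) is the set of vertices lying on cycles of G and T_G is the graph obtained from G by contracting each cycle into a vertex. Then no vertex lying on a cycle of G is adjacent to a vertex of degree 1 of G. -/

import Mathlib

/-- `(G, H)` is a complex unit gain graph: `H` is Hermitian, entries of adjacent pairs
have modulus `1`, and entries of non-adjacent pairs (including the diagonal) vanish. -/
def IsUnitGain {V : Type*} (G : SimpleGraph V) (H : Matrix V V ℂ) : Prop :=
  H.IsHermitian ∧ (∀ i j, G.Adj i j → ‖H i j‖ = 1) ∧
    ∀ i j, ¬ G.Adj i j → H i j = 0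

/-- The matching number of a simple graph: the maximum size of a matching. -/
noncomputable def matchNum {V : Type*} (G : SimpleGraph V) : ℕ :=
  sSup {n : ℕ | ∃ M : G.Subgraph, M.IsMatching ∧ M.edgeSet.ncard = n}

/-- The cyclomatic number `c(G) = |E(G)| - |V| + ω(G)` of a simple graph. -/
noncomputable def cycNum {V : Type*} (G : SimpleGraph V) : ℤ :=
  (G.edgeSet.ncard : ℤ) - (Nat.card V : ℤ) + (Nat.card G.ConnectedComponent : ℤ)

/-- The gain of a walk: the product of the matrix entries along its darts. -/
noncomputable def gain {V : Type*} {G : SimpleGraph V} (H : Matrix V V ℂ) {u v : V}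
    (w : G.Walk u v) : ℂ :=
  (w.darts.map fun d => H d.toProd.1 d.toProd.2).prod

/-- The set of vertices of `G` lying on some cycle. -/
def cycVerts {V : Type*} (G : SimpleGraph V) : Set V :=
  {u | ∃ (x : V) (w : G.Walk x x), w.IsCycle ∧ u ∈ w.support}

/-- `u` and `v` lie on a common cycle of `G`. -/
def cycleRel {V : Type*} (G : SimpleGraph V) (u v : V) : Prop :=
  ∃ (x : V) (w : G.Walk x x), w.IsCycle ∧ u ∈ w.support ∧ v ∈ w.support

/-- The setoid generated by "lying on a common cycle". -/
def contractSetoid {V : Type*} (G : SimpleGraph V) : Setoid V :=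
  Relation.EqvGen.setoid (cycleRel G)

/-- `T_G`: the graph obtained from `G` by contracting each cycle into a single vertex. -/
def TG {V : Type*} (G : SimpleGraph V) : SimpleGraph (Quotient (contractSetoid G)) where
  Adj a b := a ≠ b ∧ ∃ u v : V, Quotient.mk (contractSetoid G) u = a ∧
      Quotient.mk (contractSetoid G) v = b ∧ G.Adj u v
  symm := ⟨fun a b ⟨hne, u, v, hu, hv, hadj⟩ => ⟨hne.symm, v, u, hv, hu, hadj.symm⟩⟩
  loopless := ⟨fun a ⟨hne, _⟩ => hne rfl⟩

/-- The rank of the principal submatrix of `H` indexed by a set `s` of vertices. -/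
noncomputable def rankOn {V : Type*} [Fintype V] (H : Matrix V V ℂ) (s : Set V) : ℕ :=
  letI : Fintype s := (Set.toFinite s).fintype
  (H.submatrix (Subtype.val : s → V) (Subtype.val : s → V)).rank

/-- The cycles of `G` are pairwise vertex-disjoint: any two cycles sharing a
vertex have the same edges. -/
def cyclesDisjoint {V : Type*} (G : SimpleGraph V) : Prop :=
  ∀ ⦃x y : V⦄ (c₁ : G.Walk x x) (c₂ : G.Walk y y), c₁.IsCycle → c₂.IsCycle →
    (∃ u, u ∈ c₁.support ∧ u ∈ c₂.support) → ∀ e, e ∈ c₁.edges ↔ e ∈ c₂.edges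

/-- `b(G)`: the minimum cardinality of a set `S` of vertices such that `G - S` is
bipartite (i.e. `2`-colorable). -/
noncomputable def bipNum {V : Type*} (G : SimpleGraph V) : ℕ :=
  sInf {n : ℕ | ∃ S : Set V, S.ncard = n ∧ (G.induce Sᶜ).Colorable 2}

section Aux

variable {V : Type*} {G : SimpleGraph V}

lemma cycleRel_mem {u v : V} (h : cycleRel G u v) : u ∈ cycVerts G ∧ v ∈ cycVerts G := by
  obtain ⟨x, w, hw, hu, hv⟩ := h
  exact ⟨⟨x, w, hw, hu⟩, ⟨x, w, hw, hv⟩⟩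

lemma quot_eq_cases {x y : V}
    (h : Quotient.mk (contractSetoid G) x = Quotient.mk (contractSetoid G) y) :
    x = y ∨ (x ∈ cycVerts G ∧ y ∈ cycVerts G) := by
  have hxy : Relation.EqvGen (cycleRel G) x y := Quotient.exact h
  clear h
  induction hxy with
  | rel a b hab => exact Or.inr (cycleRel_mem hab)
  | refl a => exact Or.inl rfl
  | symm a b _ ih => exact ih.imp Eq.symm And.symm
  | trans a b c _ _ ih₁ ih₂ =>
    rcases ih₁ with rfl | ⟨ha, hb⟩
    · exact ih₂
    · rcases ih₂ with rfl | ⟨_, hc⟩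
      · exact Or.inr ⟨ha, hb⟩
      · exact Or.inr ⟨ha, hc⟩

/-- A vertex on a cycle has at least two (distinct) neighbours; so a vertex with a
unique neighbour cannot lie on a cycle. -/
lemma not_mem_cycVerts_of_unique_nbr {w : V}
    (huniq : ∀ ⦃y z : V⦄, G.Adj w y → G.Adj w z → y = z) : w ∉ cycVerts G := by
  classical
  rintro ⟨x, c, hc, hw⟩
  obtain ⟨p, hc'⟩ : ∃ p : G.Walk w w, p.IsCycle := ⟨c.rotate w hw, hc.rotate hw⟩
  cases p with
  | nil => exact hc'.not_of_nil
  | cons h q =>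
    rename_i b
    rw [SimpleGraph.Walk.cons_isCycle_iff] at hc'
    obtain ⟨hq, he⟩ := hc'
    have hbw : b ≠ w := h.ne'
    have hqd : q.darts ≠ [] := by
      intro hnil
      have : q.length = 0 := by
        have := q.length_darts
        rw [hnil] at this
        simpa using this.symm
      exact hbw (SimpleGraph.Walk.eq_of_length_eq_zero this)
    set d := q.darts.getLast hqd with hd
    have hdsnd : d.snd = w := by rw [hd, q.getLast_darts_eq_lastDart hqd]; rfl
    have hadj : G.Adj d.fst w := hdsnd ▸ d.adj
    have hbd : b = d.fst := huniq h hadj.symm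
    apply he
    have : d.edge ∈ q.edges := by
      rw [SimpleGraph.Walk.edges]
      exact List.mem_map_of_mem (List.getLast_mem hqd)
    have hde : d.edge = s(w, b) := by
      show s(d.toProd.1, d.toProd.2) = s(w, b)
      rw [hdsnd, ← hbd, Sym2.eq_swap]
    rwa [hde] at this

lemma bot_isMatching : (⊥ : G.Subgraph).IsMatching := by
  intro v hv
  simp only [SimpleGraph.Subgraph.verts_bot] at hv
  exact absurd hv (Set.notMem_empty v)

lemma matchNum_bddAbove [Finite V] :
    BddAbove {n : ℕ | ∃ M : G.Subgraph, M.IsMatching ∧ M.edgeSet.ncard = n} := by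
  classical
  refine ⟨Nat.card (Sym2 V), ?_⟩
  rintro n ⟨M, _, rfl⟩
  have h1 : M.edgeSet.ncard ≤ (Set.univ : Set (Sym2 V)).ncard :=
    Set.ncard_le_ncard (Set.subset_univ _) Set.finite_univ
  rwa [Set.ncard_univ] at h1

lemma exists_max_matching [Finite V] :
    ∃ M : G.Subgraph, M.IsMatching ∧ M.edgeSet.ncard = matchNum G := by
  have h0 : (0 : ℕ) ∈ {n : ℕ | ∃ M : G.Subgraph, M.IsMatching ∧ M.edgeSet.ncard = n} :=
    ⟨⊥, bot_isMatching, by simp [SimpleGraph.Subgraph.edgeSet_bot]⟩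
  have := Nat.sSup_mem ⟨0, h0⟩ matchNum_bddAbove
  exact this

lemma le_matchNum [Finite V] (M : G.Subgraph) (hM : M.IsMatching) :
    M.edgeSet.ncard ≤ matchNum G :=
  le_csSup matchNum_bddAbove ⟨M, hM, rfl⟩

end Aux

/-- **Lemma.** If `G` is a connected simple graph with `m(T_G) = m(G - O(G))`,
then no vertex lying on a cycle of `G` is adjacent to a vertex of degree 1. -/
theorem cycle_vertex_not_quasi_pendant {V : Type*} [Fintype V]
    (G : SimpleGraph V) [DecidableRel G.Adj] (hG : G.Connected)
    (h : matchNum (TG G) = matchNum (G.induce (cycVerts G)ᶜ)) :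
    ∀ u ∈ cycVerts G, ∀ w : V, G.Adj u w → G.degree w ≠ 1 := by
  classical
  intro u hu w huw hdeg
  -- `w` has a unique neighbour, namely `u`.
  obtain ⟨a, ha⟩ := Finset.card_eq_one.mp hdeg
  have huniq : ∀ ⦃y z : V⦄, G.Adj w y → G.Adj w z → y = z := by
    intro y z hy hz
    have hy' : y ∈ G.neighborFinset w := (SimpleGraph.mem_neighborFinset G w y).mpr hy
    have hz' : z ∈ G.neighborFinset w := (SimpleGraph.mem_neighborFinset G w z).mpr hz
    rw [ha, Finset.mem_singleton] at hy' hz'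
    rw [hy', hz']
  have hwnc : w ∉ cycVerts G := not_mem_cycVerts_of_unique_nbr huniq
  have hune : u ≠ w := huw.ne
  -- the quotient map
  set q : V → Quotient (contractSetoid G) := Quotient.mk (contractSetoid G) with hq
  have hQfin : Finite (Quotient (contractSetoid G)) := Quotient.finite _
  -- a maximum matching of `G - O(G)`
  set Vc : Set V := (cycVerts G)ᶜ with hVc
  obtain ⟨M₀, hM₀, hM₀card⟩ := exists_max_matching (G := G.induce Vc)
  -- `w` is isolated in `G - O(G)`, hence not matched
  have hno : ∀ ⦃x y : Vc⦄, M₀.Adj x y → (x : V) ≠ w := by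
    intro x y hxy hxw
    have hGadj : G.Adj (x : V) (y : V) := by
      have := M₀.adj_sub hxy
      simpa [SimpleGraph.comap_adj] using this
    have : (y : V) = u := huniq (hxw ▸ hGadj) huw.symm
    exact y.2 (this ▸ hu)
  -- injectivity of `q` on non-cycle vertices
  have hinj : Function.Injective (fun x : Vc => q (x : V)) := by
    intro x y hxy
    rcases quot_eq_cases (G := G) hxy with heq | ⟨hx, _⟩
    · exact Subtype.ext heq
    · exact absurd hx x.2
  -- build the corresponding matching in `T_G`
  set M₁ : (TG G).Subgraph :=
    { verts := (fun x : Vc => q (x : V)) '' M₀.verts ∪ {q u, q w}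
      Adj := fun a b => (∃ x y : Vc, M₀.Adj x y ∧ a = q (x : V) ∧ b = q (y : V)) ∨
        (a = q u ∧ b = q w) ∨ (a = q w ∧ b = q u)
      adj_sub := by
        rintro a b (⟨x, y, hxy, rfl, rfl⟩ | ⟨rfl, rfl⟩ | ⟨rfl, rfl⟩)
        · have hGadj : G.Adj (x : V) (y : V) := by
            have := M₀.adj_sub hxy
            simpa [SimpleGraph.comap_adj] using this
          refine And.intro ?_ ⟨x, y, rfl, rfl, hGadj⟩
          intro hqq
          rcases quot_eq_cases (G := G) hqq with heq | ⟨hx, _⟩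
          · exact hGadj.ne (by exact_mod_cast heq)
          · exact x.2 hx
        · refine And.intro ?_ ⟨u, w, rfl, rfl, huw⟩
          intro hqq
          rcases quot_eq_cases (G := G) hqq with heq | ⟨_, hw'⟩
          · exact hune heq
          · exact hwnc hw'
        · refine And.intro ?_ ⟨w, u, rfl, rfl, huw.symm⟩
          intro hqq
          rcases quot_eq_cases (G := G) hqq with heq | ⟨hw', _⟩
          · exact hune heq.symm
          · exact hwnc hw'
      edge_vert := by
        rintro a b (⟨x, y, hxy, rfl, rfl⟩ | ⟨rfl, rfl⟩ | ⟨rfl, rfl⟩)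
        · exact Or.inl ⟨x, M₀.edge_vert hxy, rfl⟩
        · exact Or.inr (Or.inl rfl)
        · exact Or.inr (Or.inr rfl)
      symm := by
        constructor
        rintro a b (⟨x, y, hxy, rfl, rfl⟩ | ⟨rfl, rfl⟩ | ⟨rfl, rfl⟩)
        · exact Or.inl ⟨y, x, M₀.adj_symm hxy, rfl, rfl⟩
        · exact Or.inr (Or.inr ⟨rfl, rfl⟩)
        · exact Or.inr (Or.inl ⟨rfl, rfl⟩) } with hM₁def
  -- auxiliary facts about `q`-values
  have hqx_ne_qu : ∀ x : Vc, q (x : V) ≠ q u := by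
    intro x hxu
    rcases quot_eq_cases (G := G) hxu with heq | ⟨hx, _⟩
    · exact x.2 (heq ▸ hu)
    · exact x.2 hx
  have hqx_eq_qw : ∀ x : Vc, q (x : V) = q w → (x : V) = w := by
    intro x hxw
    rcases quot_eq_cases (G := G) hxw with heq | ⟨hx, _⟩
    · exact heq
    · exact absurd hx x.2
  have hqu_ne_qw : q u ≠ q w := by
    intro hqq
    rcases quot_eq_cases (G := G) hqq with heq | ⟨_, hw'⟩
    · exact hune heq
    · exact hwnc hw'
  -- `M₁` is a matching
  have hM₁ : M₁.IsMatching := by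
    rintro a (⟨x, hx, rfl⟩ | ha)
    · obtain ⟨y, hy, hyuniq⟩ := hM₀ hx
      refine ⟨q (y : V), Or.inl ⟨x, y, hy, rfl, rfl⟩, ?_⟩
      rintro b (⟨x', y', hxy', hax, rfl⟩ | ⟨hax, rfl⟩ | ⟨hax, rfl⟩)
      · have : x = x' := hinj hax
        subst this
        rw [hyuniq y' hxy']
      · exact absurd hax (hqx_ne_qu x)
      · exact absurd (hqx_eq_qw x hax) (hno hy)
    · rcases ha with rfl | rfl
      · refine ⟨q w, Or.inr (Or.inl ⟨rfl, rfl⟩), ?_⟩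
        rintro b (⟨x', y', hxy', hax, rfl⟩ | ⟨_, rfl⟩ | ⟨hax, rfl⟩)
        · exact absurd hax.symm (hqx_ne_qu x')
        · rfl
        · exact absurd hax.symm hqu_ne_qw.symm
      · refine ⟨q u, Or.inr (Or.inr ⟨rfl, rfl⟩), ?_⟩
        rintro b (⟨x', y', hxy', hax, rfl⟩ | ⟨hax, rfl⟩ | ⟨_, rfl⟩)
        · exact absurd (hqx_eq_qw x' hax.symm) (hno hxy')
        · exact absurd hax.symm hqu_ne_qw
        · rfl
  -- the edge count of `M₁` exceeds that of `M₀`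
  set φ : Sym2 Vc → Sym2 (Quotient (contractSetoid G)) :=
    Sym2.map (fun x : Vc => q (x : V)) with hφ
  have hsub : insert s(q u, q w) (φ '' M₀.edgeSet) ⊆ M₁.edgeSet := by
    rintro e (rfl | ⟨e', he', rfl⟩)
    · exact SimpleGraph.Subgraph.mem_edgeSet.mpr (Or.inr (Or.inl ⟨rfl, rfl⟩))
    · induction e' with
      | h x y =>
        have hxy : M₀.Adj x y := SimpleGraph.Subgraph.mem_edgeSet.mp he'
        exact SimpleGraph.Subgraph.mem_edgeSet.mpr (Or.inl ⟨x, y, hxy, rfl, rfl⟩)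
  have hnotmem : s(q u, q w) ∉ φ '' M₀.edgeSet := by
    rintro ⟨e', he', heq⟩
    induction e' with
    | h x y =>
      have hxy : M₀.Adj x y := SimpleGraph.Subgraph.mem_edgeSet.mp he'
      rw [hφ, Sym2.map_pair_eq, Sym2.eq_iff] at heq
      rcases heq with ⟨_, hyw⟩ | ⟨hxw, _⟩
      · exact hno (M₀.adj_symm hxy) (hqx_eq_qw y hyw)
      · exact hno hxy (hqx_eq_qw x hxw)
  have hM₀fin : M₀.edgeSet.Finite := Set.toFinite _
  have hcard : (insert s(q u, q w) (φ '' M₀.edgeSet)).ncard = matchNum (G.induce Vc) + 1 := by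
    rw [Set.ncard_insert_of_notMem hnotmem (hM₀fin.image φ),
      Set.ncard_image_of_injective _ (Sym2.map.injective hinj), hM₀card]
  have hle : matchNum (G.induce Vc) + 1 ≤ matchNum (TG G) := by
    calc matchNum (G.induce Vc) + 1 = (insert s(q u, q w) (φ '' M₀.edgeSet)).ncard := hcard.symm
      _ ≤ M₁.edgeSet.ncard := Set.ncard_le_ncard hsub (Set.toFinite _)
      _ ≤ matchNum (TG G) := le_matchNum M₁ hM₁
  rw [h] at hle
  omega
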